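/- arXiv:1710.02394 — 5 statements merged into one kernel-verified Lean document; each statement's English description precedes it below -/
import Mathlib

section
/- Let c ≠ 0 and define d(P,Q) = N(P⁻¹·Q) with N(x,y,z) = √(x² + y² + (z − xy/2)²) on the Heisenberg group (ℝ³,·). A point (x,y,z) satisfies d((0,0,0),(x,y,z)) = d((x,y,z),(0,0,c)) if and only if z = (c + x·y)/2. -/
def hmul (p q : ℝ × ℝ × ℝ) : ℝ × ℝ × ℝ :=
  (p.1 + q.1, p.2.1 + q.2.1, p.2.2 + q.2.2 + p.1 * q.2.1)

def hinv (p : ℝ × ℝ × ℝ) : ℝ × ℝ × ℝ :=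
  (-p.1, -p.2.1, p.1 * p.2.1 - p.2.2)

noncomputable def N (p : ℝ × ℝ × ℝ) : ℝ :=
  Real.sqrt (p.1 ^ 2 + p.2.1 ^ 2 + (p.2.2 - p.1 * p.2.1 / 2) ^ 2)

noncomputable def d (p q : ℝ × ℝ × ℝ) : ℝ := N (hmul (hinv p) q)

theorem nil_bisector_vertical (c x y z : ℝ) (hc : c ≠ 0) :
    d ((0 : ℝ), (0 : ℝ), (0 : ℝ)) (x, y, z) = d (x, y, z) ((0 : ℝ), (0 : ℝ), c) ↔
      z = (c + x * y) / 2 := by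
  simp only [d, hmul, hinv, N]
  constructor
  · intro h
    have h2 := Real.sqrt_inj (by positivity) (by positivity) |>.mp h
    have h3 : (z - x * y / 2) ^ 2 = (c - z + x * y / 2) ^ 2 := by nlinarith [h2]
    have h4 : (z - x * y / 2 - (c - z + x * y / 2)) * (z - x * y / 2 + (c - z + x * y / 2)) = 0 := by
      nlinarith [h3]
    rcases mul_eq_zero.mp h4 with h5 | h5
    · linarith
    · exfalso; apply hc; linarith
  · intro h
    subst h
    ring_nf
end

section
/- Let a ≠ 0 and define the translation distance d(P,Q) = N(P⁻¹·Q) with N(x,y,z) = √(x² + y² + (z − xy/2)²) on the Heisenberg group (ℝ³,·). For any point (x,y,z) with y ≠ 0, d((0,0,0),(x,y,z)) = d((x,y,z),(a,0,0)) holds if and only if z = (a(y² + 4) + 2x(y² − 4))/(4y). -/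
theorem nil_bisector_x_axis (a x y z : ℝ) (ha : a ≠ 0) (hy : y ≠ 0) :
    d ((0 : ℝ), (0 : ℝ), (0 : ℝ)) (x, y, z) = d (x, y, z) (a, (0 : ℝ), (0 : ℝ)) ↔
      z = (a * (y ^ 2 + 4) + 2 * x * (y ^ 2 - 4)) / (4 * y) := by
  simp only [d, N, hmul, hinv]
  rw [Real.sqrt_inj (by positivity) (by positivity)]
  rw [eq_div_iff (by simp [hy] : 4 * y ≠ 0)]
  constructor
  · intro h
    have h2 : a * (z * (4 * y)) = a * (a * (y ^ 2 + 4) + 2 * x * (y ^ 2 - 4)) := by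
      linear_combination 4 * h
    exact mul_left_cancel₀ ha h2
  · intro h
    linear_combination (a / 4) * h
end

section
/- Let b ≠ 0 and define the translation distance d(P,Q) = N(P⁻¹·Q) with N(x,y,z) = √(x² + y² + (z − xy/2)²) on the Heisenberg group (ℝ³,·). For any point (x,y,z) with x ≠ 0, d((0,0,0),(x,y,z)) = d((x,y,z),(0,b,0)) holds if and only if z = −(x² + 4)(b − 2y)/(4x). -/
theorem nil_bisector_y_axis (b x y z : ℝ) (hb : b ≠ 0) (hx : x ≠ 0) :
    d ((0 : ℝ), (0 : ℝ), (0 : ℝ)) (x, y, z) = d (x, y, z) ((0 : ℝ), b, (0 : ℝ)) ↔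
      z = -((x ^ 2 + 4) * (b - 2 * y)) / (4 * x) := by
  simp only [d, hmul, hinv, N]
  rw [Real.sqrt_inj (by positivity) (by positivity)]
  constructor
  · intro h
    field_simp
    apply mul_left_cancel₀ hb
    linear_combination -4 * h
  · intro h
    subst h
    field_simp
    ring
end

section
/- Let a ≠ 0 and c ≠ 0, and define the translation distance d(P,Q) = N(P⁻¹·Q) with N(x,y,z) = √(x² + y² + (z − xy/2)²) on the Heisenberg group (ℝ³,·). For any point (x,y,z) with 4ay + 8c ≠ 0, d((0,0,0),(x,y,z)) = d((x,y,z),(a,0,c)) holds if and only if z = (a²(y² + 4) + 2a(2cy + x(y² − 4)) + 4c(c + xy))/(4ay + 8c). -/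
theorem nil_bisector_xz (a c x y z : ℝ) (ha : a ≠ 0) (hc : c ≠ 0)
    (hden : 4 * a * y + 8 * c ≠ 0) :
    d ((0 : ℝ), (0 : ℝ), (0 : ℝ)) (x, y, z) = d (x, y, z) (a, (0 : ℝ), c) ↔
      z = (a ^ 2 * (y ^ 2 + 4) + 2 * a * (2 * c * y + x * (y ^ 2 - 4)) + 4 * c * (c + x * y)) /
        (4 * a * y + 8 * c) := by
  simp only [d, N, hmul, hinv]
  rw [Real.sqrt_inj (by positivity) (by positivity), eq_div_iff hden]
  constructor
  · intro h
    nlinarith [h, sq_nonneg (a*y + 2*c)]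
  · intro h
    nlinarith [h]
end

section
/- Define the translation distance d(P,Q) = N(P⁻¹·Q) with N(x,y,z) = √(x² + y² + (z − xy/2)²) on the Heisenberg group (ℝ³,·). For the points A₁ = (0,0,0), A₂ = (−1,3,1), A₃ = (1/4,1/2,1/2), the triangle inequality fails: d(A₂,A₃) + d(A₁,A₃) < d(A₁,A₂). Explicitly, d(A₁,A₂) = √65/2, d(A₁,A₃) = √129/16, d(A₂,A₃) = √2529/16, and √2529 + √129 < 8√65. -/
lemma sqrt_div_sq (x c : ℝ) (hx : 0 ≤ x) (hc : 0 < c) :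
    Real.sqrt (x / c ^ 2) = Real.sqrt x / c := by
  rw [Real.sqrt_div hx, Real.sqrt_sq hc.le]

theorem nil_triangle_inequality_fails :
    d ((0 : ℝ), (0 : ℝ), (0 : ℝ)) ((-1 : ℝ), (3 : ℝ), (1 : ℝ)) = Real.sqrt 65 / 2 ∧
    d ((0 : ℝ), (0 : ℝ), (0 : ℝ)) ((1 / 4 : ℝ), (1 / 2 : ℝ), (1 / 2 : ℝ)) = Real.sqrt 129 / 16 ∧
    d ((-1 : ℝ), (3 : ℝ), (1 : ℝ)) ((1 / 4 : ℝ), (1 / 2 : ℝ), (1 / 2 : ℝ)) = Real.sqrt 2529 / 16 ∧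
    Real.sqrt 2529 + Real.sqrt 129 < 8 * Real.sqrt 65 ∧
    d ((-1 : ℝ), (3 : ℝ), (1 : ℝ)) ((1 / 4 : ℝ), (1 / 2 : ℝ), (1 / 2 : ℝ)) +
        d ((0 : ℝ), (0 : ℝ), (0 : ℝ)) ((1 / 4 : ℝ), (1 / 2 : ℝ), (1 / 2 : ℝ)) <
      d ((0 : ℝ), (0 : ℝ), (0 : ℝ)) ((-1 : ℝ), (3 : ℝ), (1 : ℝ)) := by
  have h1 : d ((0 : ℝ), (0 : ℝ), (0 : ℝ)) ((-1 : ℝ), (3 : ℝ), (1 : ℝ)) = Real.sqrt 65 / 2 := by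
    simp only [d, N, hmul, hinv]
    rw [show ((-(0:ℝ)) + -1) ^ 2 + (-(0:ℝ) + 3) ^ 2 +
        ((0:ℝ) * 0 - 0 + 1 + -0 * 3 - (-0 + -1) * (-0 + 3) / 2) ^ 2 = 65 / 2 ^ 2 by norm_num]
    exact sqrt_div_sq 65 2 (by norm_num) (by norm_num)
  have h2 : d ((0 : ℝ), (0 : ℝ), (0 : ℝ)) ((1 / 4 : ℝ), (1 / 2 : ℝ), (1 / 2 : ℝ)) =
      Real.sqrt 129 / 16 := by
    simp only [d, N, hmul, hinv]
    rw [show ((-(0:ℝ)) + 1/4) ^ 2 + (-(0:ℝ) + 1/2) ^ 2 +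
        ((0:ℝ) * 0 - 0 + 1/2 + -0 * (1/2) - (-0 + 1/4) * (-0 + 1/2) / 2) ^ 2 = 129 / 16 ^ 2 by
          norm_num]
    exact sqrt_div_sq 129 16 (by norm_num) (by norm_num)
  have h3 : d ((-1 : ℝ), (3 : ℝ), (1 : ℝ)) ((1 / 4 : ℝ), (1 / 2 : ℝ), (1 / 2 : ℝ)) =
      Real.sqrt 2529 / 16 := by
    simp only [d, N, hmul, hinv]
    rw [show ((-(-1:ℝ)) + 1/4) ^ 2 + (-(3:ℝ) + 1/2) ^ 2 +
        ((-1:ℝ) * 3 - 1 + 1/2 + -(-1) * (1/2) - (-(-1) + 1/4) * (-3 + 1/2) / 2) ^ 2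
          = 2529 / 16 ^ 2 by norm_num]
    exact sqrt_div_sq 2529 16 (by norm_num) (by norm_num)
  have key : Real.sqrt 2529 + Real.sqrt 129 < 8 * Real.sqrt 65 := by
    have ha := Real.sq_sqrt (by norm_num : (2529:ℝ) ≥ 0)
    have hb := Real.sq_sqrt (by norm_num : (129:ℝ) ≥ 0)
    have hc := Real.sq_sqrt (by norm_num : (65:ℝ) ≥ 0)
    have ha0 := Real.sqrt_nonneg (2529:ℝ)
    have hb0 := Real.sqrt_nonneg (129:ℝ)
    have hc0 := Real.sqrt_nonneg (65:ℝ)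
    have hab : Real.sqrt 2529 * Real.sqrt 129 < 751 := by
      nlinarith [mul_nonneg ha0 hb0]
    nlinarith [mul_nonneg ha0 hb0, mul_pos (by nlinarith : (0:ℝ) < Real.sqrt 65)
      (by nlinarith : (0:ℝ) < Real.sqrt 65)]
  refine ⟨h1, h2, h3, key, ?_⟩
  rw [h1, h2, h3]
  linarith
end
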